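/- Let E be a Polish space with Borel σ-algebra 𝓔 and U a compact metric space. Let P^a(x,·) be a controlled transition kernel on E, and let u_n, u : E → U be Borel measurable controls with u_n(x) → u(x) for every x ∈ E, such that for every x ∈ E, sup_{B ∈ 𝓔} |Q^{u_n}(x,B) − Q^{u}(x,B)| → 0 as n → ∞. Assume there are Δ ∈ [0,1) and Borel probability measures π^{u_n}, π^{u} with sup_{B ∈ 𝓔} |(Q^{u_n})^k(x,B) − π^{u_n}(B)| ≤ Δ^k and sup_{B ∈ 𝓔} |(Q^{u})^k(x,B) − π^{u}(B)| ≤ Δ^k for all k, n, x. Let c : E × U → ℝ be bounded, Borel measurable, and continuous in its second variable. Then ∫_E c(y,u_n(y)) π^{u_n}(dy) → ∫_E c(y,u(y)) π^{u}(dy) as n → ∞. -/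

import Mathlib

open MeasureTheory ProbabilityTheory Filter
open scoped ENNReal

/-- Total variation distance `sup_{B ∈ 𝓔} |μ(B) − ν(B)|`. -/
noncomputable def tvDist {E : Type*} [MeasurableSpace E] (μ ν : Measure E) : ℝ :=
  ⨆ B : {B : Set E // MeasurableSet B}, |(μ B.1).toReal - (ν B.1).toReal|

/-- `k`-th iterate of a kernel. -/
noncomputable def kIter {E : Type*} [MeasurableSpace E] (Q : Kernel E E) : ℕ → Kernel E E
  | 0 => Kernel.id
  | k + 1 => (kIter Q k) ∘ₖ Q

/-- The kernel `Q^u(x,·) = P^{u(x)}(x,·)` associated with a Borel measurable control `u`. -/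
noncomputable def Qctrl {E U : Type*} [MeasurableSpace E] [MeasurableSpace U]
    (P : Kernel (E × U) E) (u : E → U) (hu : Measurable u) : Kernel E E :=
  P.comap (fun x => (x, u x)) (measurable_id.prodMk hu)

section Aux
variable {E : Type*} [MeasurableSpace E]

instance : Nonempty {B : Set E // MeasurableSet B} := ⟨⟨∅, MeasurableSet.empty⟩⟩

lemma tvDist_nonneg (μ ν : Measure E) : 0 ≤ tvDist μ ν :=
  Real.iSup_nonneg fun _ => abs_nonneg _

lemma tvDist_bddAbove (μ ν : Measure E) [IsFiniteMeasure μ] [IsFiniteMeasure ν] :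
    BddAbove (Set.range fun B : {B : Set E // MeasurableSet B} =>
      |(μ B.1).toReal - (ν B.1).toReal|) := by
  refine ⟨(μ Set.univ).toReal + (ν Set.univ).toReal, ?_⟩
  rintro x ⟨B, rfl⟩
  have h1 : (μ B.1).toReal ≤ (μ Set.univ).toReal :=
    ENNReal.toReal_mono (measure_ne_top _ _) (measure_mono (Set.subset_univ _))
  have h2 : (ν B.1).toReal ≤ (ν Set.univ).toReal :=
    ENNReal.toReal_mono (measure_ne_top _ _) (measure_mono (Set.subset_univ _))
  have h3 : 0 ≤ (μ B.1).toReal := ENNReal.toReal_nonneg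
  have h4 : 0 ≤ (ν B.1).toReal := ENNReal.toReal_nonneg
  rw [abs_sub_le_iff]
  constructor <;> linarith

lemma abs_le_tvDist (μ ν : Measure E) [IsFiniteMeasure μ] [IsFiniteMeasure ν]
    {B : Set E} (hB : MeasurableSet B) :
    |(μ B).toReal - (ν B).toReal| ≤ tvDist μ ν :=
  le_ciSup (tvDist_bddAbove μ ν) (⟨B, hB⟩ : {B : Set E // MeasurableSet B})

lemma jordan_aux (μ ν : Measure E) [IsFiniteMeasure μ] [IsFiniteMeasure ν]
    (hμν : μ Set.univ = ν Set.univ) :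
    ∃ (p q : Measure E), IsFiniteMeasure p ∧ IsFiniteMeasure q ∧ μ + q = ν + p ∧
      p Set.univ = q Set.univ ∧ (p Set.univ).toReal ≤ tvDist μ ν := by
  set s : SignedMeasure E := μ.toSignedMeasure - ν.toSignedMeasure with hs
  set j := s.toJordanDecomposition with hj
  set p := j.posPart
  set q := j.negPart
  have hkey : ∀ B : Set E, MeasurableSet B →
      (μ B).toReal - (ν B).toReal = (p B).toReal - (q B).toReal := by
    intro B hB
    have h1 : s B = (μ B).toReal - (ν B).toReal := by
      rw [hs, VectorMeasure.sub_apply, Measure.toSignedMeasure_apply_measurable hB,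
        Measure.toSignedMeasure_apply_measurable hB]
      rfl
    have h2 : j.toSignedMeasure = s := s.toSignedMeasure_toJordanDecomposition
    have h3 : j.toSignedMeasure B = (p B).toReal - (q B).toReal := by
      rw [JordanDecomposition.toSignedMeasure, VectorMeasure.sub_apply,
        Measure.toSignedMeasure_apply_measurable hB,
        Measure.toSignedMeasure_apply_measurable hB]
      rfl
    rw [← h1, ← h2, h3]
  have heq : μ + q = ν + p := by
    ext B hB
    have := hkey B hB
    have hμt : μ B ≠ ⊤ := measure_ne_top _ _
    have hνt : ν B ≠ ⊤ := measure_ne_top _ _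
    have hpt : p B ≠ ⊤ := measure_ne_top _ _
    have hqt : q B ≠ ⊤ := measure_ne_top _ _
    rw [Measure.add_apply, Measure.add_apply]
    rw [← ENNReal.toReal_eq_toReal_iff' (by finiteness) (by finiteness)]
    rw [ENNReal.toReal_add hμt hqt, ENNReal.toReal_add hνt hpt]
    linarith
  have hpq : p Set.univ = q Set.univ := by
    have := hkey Set.univ MeasurableSet.univ
    rw [hμν, sub_self] at this
    have h0 : (p Set.univ).toReal = (q Set.univ).toReal := by linarith
    exact (ENNReal.toReal_eq_toReal_iff' (measure_ne_top _ _) (measure_ne_top _ _)).mp h0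
  obtain ⟨S, hSm, hS1, hS2⟩ := j.mutuallySingular
  have hple : (p Set.univ).toReal ≤ tvDist μ ν := by
    have hc : p Sᶜ = p Set.univ := by
      have := measure_add_measure_compl (μ := p) hSm
      rw [hS1, zero_add] at this; exact this
    have habs : (μ Sᶜ).toReal - (ν Sᶜ).toReal = (p Set.univ).toReal := by
      rw [hkey Sᶜ hSm.compl, hS2, hc]; simp
    calc (p Set.univ).toReal = |(μ Sᶜ).toReal - (ν Sᶜ).toReal| := by
          rw [habs]; exact (abs_of_nonneg ENNReal.toReal_nonneg).symm
      _ ≤ tvDist μ ν := abs_le_tvDist μ ν hSm.compl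
  exact ⟨p, q, inferInstance, inferInstance, heq, hpq, hple⟩

lemma integrable_of_bound (μ : Measure E) [IsFiniteMeasure μ] {f : E → ℝ}
    (hf : Measurable f) {C : ℝ} (hC : ∀ x, |f x| ≤ C) : Integrable f μ := by
  refine Integrable.mono' (integrable_const C) hf.aestronglyMeasurable ?_
  filter_upwards with x using (by simpa [Real.norm_eq_abs] using hC x)

lemma integral_sub_le_tvDist (μ ν : Measure E) [IsFiniteMeasure μ] [IsFiniteMeasure ν]
    (hμν : μ Set.univ = ν Set.univ) {f : E → ℝ} (hf : Measurable f) {C : ℝ}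
    (hC0 : 0 ≤ C) (hC : ∀ x, |f x| ≤ C) :
    |∫ x, f x ∂μ - ∫ x, f x ∂ν| ≤ 2 * C * tvDist μ ν := by
  obtain ⟨p, q, hp, hq, heq, hpq, hple⟩ := jordan_aux μ ν hμν
  haveI := hp; haveI := hq
  have h1 : ∫ x, f x ∂μ + ∫ x, f x ∂q = ∫ x, f x ∂ν + ∫ x, f x ∂p := by
    rw [← integral_add_measure (integrable_of_bound μ hf hC) (integrable_of_bound q hf hC),
      ← integral_add_measure (integrable_of_bound ν hf hC) (integrable_of_bound p hf hC), heq]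
  have h2 : |∫ x, f x ∂p| ≤ C * (p Set.univ).toReal := by
    have := norm_integral_le_of_norm_le_const (μ := p) (f := f) (C := C)
      (Filter.Eventually.of_forall fun x => by simpa [Real.norm_eq_abs] using hC x)
    rw [Real.norm_eq_abs] at this; exact this
  have h3 : |∫ x, f x ∂q| ≤ C * (q Set.univ).toReal := by
    have := norm_integral_le_of_norm_le_const (μ := q) (f := f) (C := C)
      (Filter.Eventually.of_forall fun x => by simpa [Real.norm_eq_abs] using hC x)
    rw [Real.norm_eq_abs] at this; exact this
  have h4 : (q Set.univ).toReal = (p Set.univ).toReal := by rw [hpq]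
  have h5 : |∫ x, f x ∂μ - ∫ x, f x ∂ν| = |∫ x, f x ∂p - ∫ x, f x ∂q| := by
    congr 1; linarith
  rw [h5]
  calc |∫ x, f x ∂p - ∫ x, f x ∂q| ≤ |∫ x, f x ∂p| + |∫ x, f x ∂q| := abs_sub _ _
    _ ≤ C * (p Set.univ).toReal + C * (p Set.univ).toReal := by rw [h4] at h3; linarith
    _ = 2 * C * (p Set.univ).toReal := by ring
    _ ≤ 2 * C * tvDist μ ν := by
        apply mul_le_mul_of_nonneg_left hple (by linarith)

end Aux

section KerAux
variable {E : Type*} [MeasurableSpace E]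

lemma kIter_zero (Q : Kernel E E) : kIter Q 0 = Kernel.id := rfl
lemma kIter_succ (Q : Kernel E E) (k : ℕ) : kIter Q (k + 1) = kIter Q k ∘ₖ Q := rfl

instance kIter_markov (Q : Kernel E E) [IsMarkovKernel Q] (k : ℕ) :
    IsMarkovKernel (kIter Q k) := by
  induction k with
  | zero => rw [kIter_zero]; infer_instance
  | succ k ih => rw [kIter_succ]; exact Kernel.IsMarkovKernel.comp _ _

lemma kIter_succ' (Q : Kernel E E) [IsMarkovKernel Q] (k : ℕ) :
    kIter Q (k + 1) = Q ∘ₖ kIter Q k := by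
  induction k with
  | zero => rw [kIter_succ, kIter_zero, Kernel.comp_id, Kernel.id_comp]
  | succ k ih =>
      rw [kIter_succ, ih, Kernel.comp_assoc, ← kIter_succ, ih]

/-- `toReal` evaluation of a composed kernel as a Bochner integral. -/
lemma comp_apply_toReal (A : Kernel E E) [IsMarkovKernel A] (ρ : Measure E)
    {B : Set E} (hB : MeasurableSet B) :
    (ρ.bind A B).toReal = ∫ y, ((A y B).toReal) ∂ρ := by
  rw [Measure.bind_apply hB (Kernel.measurable A).aemeasurable]
  rw [integral_toReal ((Kernel.measurable_coe A hB).aemeasurable) ?_]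
  filter_upwards with y using lt_of_le_of_lt prob_le_one ENNReal.one_lt_top

lemma comp_kernel_apply_toReal (A K : Kernel E E) [IsMarkovKernel A] [IsMarkovKernel K]
    (x : E) {B : Set E} (hB : MeasurableSet B) :
    (((A ∘ₖ K) x) B).toReal = ∫ y, ((A y B).toReal) ∂(K x) := by
  rw [Kernel.comp_apply, comp_apply_toReal A (K x) hB]

end KerAux

section Tel
variable {E : Type*} [MeasurableSpace E]

lemma kernel_eval_le_one (A : Kernel E E) [IsMarkovKernel A] (y : E) (B : Set E) :
    (A y B).toReal ≤ 1 := by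
  have h : A y B ≤ 1 := prob_le_one
  simpa using ENNReal.toReal_mono ENNReal.one_ne_top h

lemma kernel_eval_integrable (A : Kernel E E) [IsMarkovKernel A] (ρ : Measure E)
    [IsFiniteMeasure ρ] {B : Set E} (hB : MeasurableSet B) :
    Integrable (fun y => (A y B).toReal) ρ :=
  integrable_of_bound ρ ((Kernel.measurable_coe A hB).ennreal_toReal)
    (C := 1) fun y => by
      rw [abs_of_nonneg ENNReal.toReal_nonneg]; exact kernel_eval_le_one A y B

lemma pointwise_two_tv (A : Kernel E E) [IsMarkovKernel A] (μ ν : Measure E)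
    [IsProbabilityMeasure μ] [IsProbabilityMeasure ν] {B : Set E} (hB : MeasurableSet B) :
    |(μ.bind A B).toReal - (ν.bind A B).toReal| ≤ 2 * tvDist μ ν := by
  rw [comp_apply_toReal A μ hB, comp_apply_toReal A ν hB]
  have := integral_sub_le_tvDist μ ν (by simp)
    (f := fun y => (A y B).toReal)
    ((Kernel.measurable_coe A hB).ennreal_toReal) (C := 1) zero_le_one
    (fun y => by rw [abs_of_nonneg ENNReal.toReal_nonneg]; exact kernel_eval_le_one A y B)
  simpa using this

lemma telescope (K Q : Kernel E E) [IsMarkovKernel K] [IsMarkovKernel Q] (k : ℕ) (x : E)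
    {B : Set E} (hB : MeasurableSet B) :
    |((kIter K k) x B).toReal - ((kIter Q k) x B).toReal| ≤
      ∑ j ∈ Finset.range k, ∫ y,
        |((kIter K (k-1-j) ∘ₖ K) y B).toReal - ((kIter K (k-1-j) ∘ₖ Q) y B).toReal|
        ∂ ((kIter Q j) x) := by
  set F : ℕ → ℝ := fun j => ((kIter K (k-j) ∘ₖ kIter Q j) x B).toReal with hF
  have hF0 : F 0 = ((kIter K k) x B).toReal := by
    simp only [hF, Nat.sub_zero, kIter_zero, Kernel.comp_id]
  have hFk : F k = ((kIter Q k) x B).toReal := by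
    simp only [hF, Nat.sub_self, kIter_zero, Kernel.id_comp]
  have hsum : F 0 - F k = ∑ j ∈ Finset.range k, (F j - F (j+1)) :=
    (Finset.sum_range_sub' F k).symm
  rw [← hF0, ← hFk, hsum]
  refine le_trans (Finset.abs_sum_le_sum_abs _ _) (Finset.sum_le_sum ?_)
  intro j hj
  have hjk : j < k := Finset.mem_range.mp hj
  set m := k - 1 - j with hmdef
  have hm : k - j = m + 1 := by omega
  have hm' : k - (j+1) = m := by omega
  have hFj : F j = ∫ y, ((kIter K m ∘ₖ K) y B).toReal ∂ ((kIter Q j) x) := by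
    simp only [hF]
    rw [hm, kIter_succ, comp_kernel_apply_toReal (kIter K m ∘ₖ K) (kIter Q j) x hB]
  have hFj1 : F (j+1) = ∫ y, ((kIter K m ∘ₖ Q) y B).toReal ∂ ((kIter Q j) x) := by
    simp only [hF]
    rw [hm', kIter_succ', ← Kernel.comp_assoc,
      comp_kernel_apply_toReal (kIter K m ∘ₖ Q) (kIter Q j) x hB]
  rw [hFj, hFj1, ← integral_sub (kernel_eval_integrable _ _ hB) (kernel_eval_integrable _ _ hB)]
  simpa [Real.norm_eq_abs] using
    norm_integral_le_integral_norm (μ := (kIter Q j) x)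
      (f := fun y => ((kIter K m ∘ₖ K) y B).toReal - ((kIter K m ∘ₖ Q) y B).toReal)

end Tel


/-- Theorem 1, second claim: under uniform ergodicity with rate `Δ^k`
and total variation convergence of the controlled kernels along `u_n → u`,
the average costs `∫ c(y,u_n(y)) dπ^{u_n}` converge to `∫ c(y,u(y)) dπ^u`. -/
theorem stmt4 {E U : Type*} [TopologicalSpace E] [PolishSpace E]
    [MeasurableSpace E] [BorelSpace E]
    [MetricSpace U] [CompactSpace U] [MeasurableSpace U] [BorelSpace U]
    (P : Kernel (E × U) E) [IsMarkovKernel P]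
    (un : ℕ → E → U) (u : E → U)
    (hun : ∀ n, Measurable (un n)) (hu : Measurable u)
    (hconv : ∀ x, Tendsto (fun n => un n x) atTop (nhds (u x)))
    (htv : ∀ x, Tendsto
      (fun n => tvDist (Qctrl P (un n) (hun n) x) (Qctrl P u hu x)) atTop (nhds 0))
    (Δ : ℝ) (hΔ0 : 0 ≤ Δ) (hΔ1 : Δ < 1)
    (πn : ℕ → Measure E) (πu : Measure E)
    [∀ n, IsProbabilityMeasure (πn n)] [IsProbabilityMeasure πu]
    (hergn : ∀ k : ℕ, 1 ≤ k → ∀ n : ℕ, ∀ x : E,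
      tvDist (kIter (Qctrl P (un n) (hun n)) k x) (πn n) ≤ Δ ^ k)
    (herg : ∀ k : ℕ, 1 ≤ k → ∀ x : E,
      tvDist (kIter (Qctrl P u hu) k x) πu ≤ Δ ^ k)
    (c : E × U → ℝ) (hc : Measurable c) (C : ℝ) (hcb : ∀ p, |c p| ≤ C)
    (hccont : ∀ y : E, Continuous (fun a : U => c (y, a))) :
    Tendsto (fun n => ∫ y, c (y, un n y) ∂ (πn n)) atTop
      (nhds (∫ y, c (y, u y) ∂ πu)) := by
  -- `E` is nonempty since it carries a probability measure
  have hne : Nonempty E := by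
    by_contra h
    rw [not_nonempty_iff] at h
    have h1 : πu Set.univ = 1 := measure_univ
    rw [Set.univ_eq_empty_iff.mpr h] at h1
    simp at h1
  obtain ⟨x₀⟩ := hne
  set K : ℕ → Kernel E E := fun n => Qctrl P (un n) (hun n) with hK
  set Q : Kernel E E := Qctrl P u hu with hQ
  haveI hKm : ∀ n, IsMarkovKernel (K n) := fun n => by
    rw [hK]; unfold Qctrl; infer_instance
  haveI hQm : IsMarkovKernel Q := by rw [hQ]; unfold Qctrl; infer_instance
  have hC0 : 0 ≤ C := le_trans (abs_nonneg _) (hcb (x₀, u x₀))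
  -- Step 1: total variation convergence of the invariant measures
  have htvpi : Tendsto (fun n => tvDist (πn n) πu) atTop (nhds 0) := by
    have hchoice : ∀ n : ℕ, ∃ B : {B : Set E // MeasurableSet B},
        tvDist (πn n) πu ≤ |((πn n) B.1).toReal - (πu B.1).toReal| + 1/(n+1) := by
      intro n
      have hpos : (0:ℝ) < 1/(n+1) := by positivity
      obtain ⟨B, hB⟩ := exists_lt_of_lt_ciSup
        (show tvDist (πn n) πu - 1/(n+1) < tvDist (πn n) πu from sub_lt_self _ hpos)
      exact ⟨B, by linarith⟩
    choose Bs hBs using hchoice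
    have hbound : ∀ k, 1 ≤ k → ∀ n,
        tvDist (πn n) πu ≤ 2*Δ^k + ((∑ j ∈ Finset.range k, ∫ y,
          |((kIter (K n) (k-1-j) ∘ₖ (K n)) y (Bs n).1).toReal -
           ((kIter (K n) (k-1-j) ∘ₖ Q) y (Bs n).1).toReal| ∂ ((kIter Q j) x₀)) + 1/(n+1)) := by
      intro k hk n
      have h1 := hBs n
      set B := (Bs n).1 with hBdef
      have hBm : MeasurableSet B := (Bs n).2
      have t1 : |((πn n) B).toReal - ((kIter (K n) k x₀) B).toReal| ≤ Δ^k := by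
        rw [abs_sub_comm]
        exact le_trans (abs_le_tvDist _ _ hBm) (hergn k hk n x₀)
      have t3 : |((kIter Q k x₀) B).toReal - (πu B).toReal| ≤ Δ^k :=
        le_trans (abs_le_tvDist _ _ hBm) (herg k hk x₀)
      have t2 := telescope (K n) Q k x₀ hBm
      have tri : |((πn n) B).toReal - (πu B).toReal| ≤
          |((πn n) B).toReal - ((kIter (K n) k x₀) B).toReal| +
          |((kIter (K n) k x₀) B).toReal - ((kIter Q k x₀) B).toReal| +
          |((kIter Q k x₀) B).toReal - (πu B).toReal| := by
        have a1 := abs_sub_le ((πn n) B).toReal ((kIter (K n) k x₀) B).toReal (πu B).toReal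
        have a2 := abs_sub_le ((kIter (K n) k x₀) B).toReal ((kIter Q k x₀) B).toReal (πu B).toReal
        linarith
      linarith
    rw [Metric.tendsto_atTop]
    intro ε hε
    obtain ⟨k, hkd, hk1⟩ := (((tendsto_pow_atTop_nhds_zero_of_lt_one hΔ0 hΔ1).eventually_lt_const
      (show (0:ℝ) < ε/4 by linarith)).and (eventually_ge_atTop 1)).exists
    have hrest : Tendsto (fun n => (∑ j ∈ Finset.range k, ∫ y,
        |((kIter (K n) (k-1-j) ∘ₖ (K n)) y (Bs n).1).toReal -
         ((kIter (K n) (k-1-j) ∘ₖ Q) y (Bs n).1).toReal| ∂ ((kIter Q j) x₀)) + 1/(n+1))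
        atTop (nhds 0) := by
      have hsum : Tendsto (fun n => ∑ j ∈ Finset.range k, ∫ y,
          |((kIter (K n) (k-1-j) ∘ₖ (K n)) y (Bs n).1).toReal -
           ((kIter (K n) (k-1-j) ∘ₖ Q) y (Bs n).1).toReal| ∂ ((kIter Q j) x₀))
          atTop (nhds 0) := by
        have : ∀ j ∈ Finset.range k, Tendsto (fun n => ∫ y,
            |((kIter (K n) (k-1-j) ∘ₖ (K n)) y (Bs n).1).toReal -
             ((kIter (K n) (k-1-j) ∘ₖ Q) y (Bs n).1).toReal| ∂ ((kIter Q j) x₀))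
            atTop (nhds 0) := by
          intro j _
          have h0 : (∫ y, (0:ℝ) ∂ ((kIter Q j) x₀)) = 0 := integral_zero _ _
          rw [← h0]
          refine tendsto_integral_of_dominated_convergence (fun _ => 2) ?_ (integrable_const 2) ?_ ?_
          · intro n
            exact (((Kernel.measurable_coe _ (Bs n).2).ennreal_toReal.sub
              ((Kernel.measurable_coe _ (Bs n).2).ennreal_toReal)).abs).aestronglyMeasurable
          · intro n
            filter_upwards with y
            rw [Real.norm_eq_abs, abs_abs, abs_sub_le_iff]
            have b1 := kernel_eval_le_one (kIter (K n) (k-1-j) ∘ₖ (K n)) y (Bs n).1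
            have b2 := kernel_eval_le_one (kIter (K n) (k-1-j) ∘ₖ Q) y (Bs n).1
            have b3 : (0:ℝ) ≤ ((kIter (K n) (k-1-j) ∘ₖ (K n)) y (Bs n).1).toReal :=
              ENNReal.toReal_nonneg
            have b4 : (0:ℝ) ≤ ((kIter (K n) (k-1-j) ∘ₖ Q) y (Bs n).1).toReal :=
              ENNReal.toReal_nonneg
            constructor <;> linarith
          · filter_upwards with y
            refine squeeze_zero (g := fun n => 2 * tvDist (K n y) (Q y))
              (fun n => abs_nonneg _) (fun n => ?_) ?_
            · have hpt := pointwise_two_tv (kIter (K n) (k-1-j)) ((K n) y) (Q y) (Bs n).2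
              rw [← Kernel.comp_apply, ← Kernel.comp_apply] at hpt
              exact hpt
            · simpa using (htv y).const_mul 2
        have := tendsto_finset_sum (Finset.range k) this
        simpa using this
      have := hsum.add tendsto_one_div_add_atTop_nhds_zero_nat
      simpa using this
    have hev : ∀ᶠ n in atTop, (∑ j ∈ Finset.range k, ∫ y,
        |((kIter (K n) (k-1-j) ∘ₖ (K n)) y (Bs n).1).toReal -
         ((kIter (K n) (k-1-j) ∘ₖ Q) y (Bs n).1).toReal| ∂ ((kIter Q j) x₀)) + 1/(n+1) < ε/2 :=
      hrest.eventually_lt_const (by linarith)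
    obtain ⟨N, hN⟩ := eventually_atTop.mp hev
    refine ⟨N, fun n hn => ?_⟩
    have hb := hbound k hk1 n
    have h2 := hN n hn
    have hnn : 0 ≤ tvDist (πn n) πu := tvDist_nonneg _ _
    rw [Real.dist_eq, sub_zero, abs_of_nonneg hnn]
    have : 2*Δ^k < ε/2 := by linarith
    linarith
  -- Step 2: combine with continuity of the cost
  have hmeas_cn : ∀ n, Measurable (fun y => c (y, un n y)) :=
    fun n => hc.comp (measurable_id.prodMk (hun n))
  have hd : Tendsto (fun n => ∫ y, c (y, un n y) ∂πu) atTop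
      (nhds (∫ y, c (y, u y) ∂πu)) := by
    refine tendsto_integral_of_dominated_convergence (fun _ => C)
      (fun n => (hmeas_cn n).aestronglyMeasurable) (integrable_const C) ?_ ?_
    · intro n
      filter_upwards with y
      rw [Real.norm_eq_abs]; exact hcb _
    · filter_upwards with y
      exact ((hccont y).tendsto (u y)).comp (hconv y)
  have hkey : ∀ n, |∫ y, c (y, un n y) ∂(πn n) - ∫ y, c (y, un n y) ∂πu| ≤
      2*C*tvDist (πn n) πu :=
    fun n => integral_sub_le_tvDist (πn n) πu (by simp) (hmeas_cn n) hC0 (fun y => hcb _)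
  have hfinal : Tendsto (fun n => ∫ y, c (y, un n y) ∂(πn n) - ∫ y, c (y, u y) ∂πu)
      atTop (nhds 0) := by
    refine squeeze_zero_norm (a := fun n => 2*C*tvDist (πn n) πu +
      |∫ y, c (y, un n y) ∂πu - ∫ y, c (y, u y) ∂πu|) (fun n => ?_) ?_
    · rw [Real.norm_eq_abs]
      have a1 := abs_sub_le (∫ y, c (y, un n y) ∂(πn n)) (∫ y, c (y, un n y) ∂πu)
        (∫ y, c (y, u y) ∂πu)
      have := hkey n
      linarith
    · have h1 : Tendsto (fun n => 2*C*tvDist (πn n) πu) atTop (nhds 0) := by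
        simpa using htvpi.const_mul (2*C)
      have h2 : Tendsto (fun n => |∫ y, c (y, un n y) ∂πu - ∫ y, c (y, u y) ∂πu|)
          atTop (nhds 0) := by
        have := (hd.sub (tendsto_const_nhds (x := ∫ y, c (y, u y) ∂πu))).abs
        simpa using this
      simpa using h1.add h2
  have := hfinal.add (tendsto_const_nhds (x := ∫ y, c (y, u y) ∂πu))
  simpa using this
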